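/- Let M be a 3-connected matroid with r(M) ≥ 4 and r*(M) ≥ 4, and let N be a 3-connected minor of M with at most three elements. Then every elastic element of M is N-elastic. -/

import Mathlib

open Set Matroid

namespace ElasticPaper

variable {α : Type*}

/-! ### Basic operations: deletion, contraction, minors, isomorphism -/

/-- The deletion `M \ D`. -/
def del (M : Matroid α) (D : Set α) : Matroid α := M ↾ (M.E \ D)

/-- The contraction `M / C`. -/
def con (M : Matroid α) (C : Set α) : Matroid α := (del M✶ C)✶

/-- `N` is a minor of `M`. -/
def IsMinorOf (N M : Matroid α) : Prop := ∃ C D : Set α, N = del (con M C) D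

/-- Isomorphism of matroids (on a common label type). -/
def Iso (M N : Matroid α) : Prop :=
  ∃ f : α → α, Set.BijOn f M.E N.E ∧ ∀ I ⊆ M.E, (M.Indep I ↔ N.Indep (f '' I))

/-- `M` has a minor isomorphic to `N`. -/
def HasMinorIso (M N : Matroid α) : Prop := ∃ N', IsMinorOf N' M ∧ Iso N N'

/-! ### Rank and connectivity -/

/-- The rank of a set, valued in `ℕ∞`. -/
noncomputable def eRk (M : Matroid α) (X : Set α) : ℕ∞ :=
  ⨆ I ∈ {I : Set α | M.Indep I ∧ I ⊆ X}, I.encard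

/-- The rank of a matroid. -/
noncomputable def eRank (M : Matroid α) : ℕ∞ := eRk M M.E

/-- `X` is `k`-separating in `M`, i.e. `λ(X) ≤ k - 1`. -/
def KSeparating (M : Matroid α) (k : ℕ) (X : Set α) : Prop :=
  eRk M X + eRk M (M.E \ X) + 1 ≤ eRank M + (k : ℕ∞)

/-- `X` is exactly `k`-separating in `M`, i.e. `λ(X) = k - 1`. -/
def ExactlyKSeparating (M : Matroid α) (k : ℕ) (X : Set α) : Prop :=
  eRk M X + eRk M (M.E \ X) + 1 = eRank M + (k : ℕ∞)

/-- `(X, Y)` is a `k`-separation of `M`. -/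
def KSeparation (M : Matroid α) (k : ℕ) (X Y : Set α) : Prop :=
  Disjoint X Y ∧ X ∪ Y = M.E ∧ KSeparating M k X ∧
    (k : ℕ∞) ≤ X.encard ∧ (k : ℕ∞) ≤ Y.encard

/-- `M` is `n`-connected: it has no `k`-separations for `k < n`. -/
def NConnected (M : Matroid α) (n : ℕ) : Prop :=
  ∀ k X Y, k < n → ¬ KSeparation M k X Y

/-- `M` is `3`-connected. -/
abbrev ThreeConnected (M : Matroid α) : Prop := NConnected M 3

/-- `(X, Y)` is a vertical `k`-separation of `M`. -/
def VerticalKSeparation (M : Matroid α) (k : ℕ) (X Y : Set α) : Prop :=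
  KSeparation M k X Y ∧ (k : ℕ∞) ≤ eRk M X ∧ (k : ℕ∞) ≤ eRk M Y

/-- `(X, {e}, Y)` is a vertical `3`-separation of `M`. -/
def Vertical3Sep (M : Matroid α) (X : Set α) (e : α) (Y : Set α) : Prop :=
  e ∉ X ∧ e ∉ Y ∧ Disjoint X Y ∧ X ∪ {e} ∪ Y = M.E ∧
  VerticalKSeparation M 3 (X ∪ {e}) Y ∧ VerticalKSeparation M 3 X (Y ∪ {e}) ∧
  e ∈ M.closure X ∧ e ∈ M.closure Y

/-- `(X, {e}, Y)` is a cyclic `3`-separation of `M`. -/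
def Cyclic3Sep (M : Matroid α) (X : Set α) (e : α) (Y : Set α) : Prop :=
  Vertical3Sep M✶ X e Y

/-- `Y ∪ {e}` is maximal among vertical 3-separations of `M`. -/
def VertMaximal (M : Matroid α) (e : α) (Y : Set α) : Prop :=
  ∀ X' : Set α, ∀ e' : α, ∀ Y' : Set α,
    Vertical3Sep M X' e' Y' → ¬ (Y ∪ {e} ⊂ Y' ∪ {e'})

/-! ### Circuits, fans -/

/-- A circuit is a minimal dependent set. -/
def Circuit (M : Matroid α) (C : Set α) : Prop := M.Dep C ∧ ∀ D, D ⊂ C → M.Indep D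

/-- A triangle is a 3-element circuit. -/
def Triangle (M : Matroid α) (T : Set α) : Prop := Circuit M T ∧ T.encard = 3

/-- A triad is a 3-element cocircuit. -/
def Triad (M : Matroid α) (T : Set α) : Prop := Circuit M✶ T ∧ T.encard = 3

/-- `f 0, f 1, …, f (k-1)` is a fan ordering in `M`. -/
def FanOrdering (M : Matroid α) (k : ℕ) (f : ℕ → α) : Prop :=
  3 ≤ k ∧ Set.InjOn f (Set.Iio k) ∧ (∀ i < k, f i ∈ M.E) ∧
  (∀ i, i + 2 < k →
    (Triangle M {f i, f (i+1), f (i+2)} ∨ Triad M {f i, f (i+1), f (i+2)})) ∧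
  (∀ i, i + 3 < k →
    (Triangle M {f i, f (i+1), f (i+2)} → Triad M {f (i+1), f (i+2), f (i+3)}) ∧
    (Triad M {f i, f (i+1), f (i+2)} → Triangle M {f (i+1), f (i+2), f (i+3)}))

/-- `F` is a fan of `M`. -/
def IsFan (M : Matroid α) (F : Set α) : Prop :=
  ∃ k f, FanOrdering M k f ∧ F = f '' (Set.Iio k)

/-- `M` has no 4-element fans. -/
def NoFourElementFan (M : Matroid α) : Prop := ¬ ∃ F, IsFan M F ∧ F.encard = 4

/-- A convenient ordering function for a 4-element fan. -/
def quad (a b c d : α) : ℕ → α :=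
  fun i => if i = 0 then a else if i = 1 then b else if i = 2 then c else d

/-! ### Simplification and cosimplification -/

/-- `e` is a nonloop of `M`. -/
def Nonloop (M : Matroid α) (e : α) : Prop := M.Indep {e}

/-- `S` is a simplification of `M`: the restriction of `M` to a transversal of the
parallel classes of `M`. -/
def IsSimplificationOf (S M : Matroid α) : Prop :=
  ∃ X : Set α, (∀ x ∈ X, Nonloop M x) ∧
    (∀ e, Nonloop M e → ∃! x, x ∈ X ∧ M.closure {x} = M.closure {e}) ∧
    S = M ↾ X

/-- `S` is a cosimplification of `M`. -/
def IsCosimplificationOf (S M : Matroid α) : Prop := IsSimplificationOf S✶ M✶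

/-- `si M` is 3-connected. -/
def SiConn3 (M : Matroid α) : Prop := ∀ S, IsSimplificationOf S M → ThreeConnected S

/-- `co M` is 3-connected. -/
def CoConn3 (M : Matroid α) : Prop := ∀ S, IsCosimplificationOf S M → ThreeConnected S

/-- `si M` has an `N`-minor. -/
def SiHasMinor (M N : Matroid α) : Prop := ∀ S, IsSimplificationOf S M → HasMinorIso S N

/-- `co M` has an `N`-minor. -/
def CoHasMinor (M N : Matroid α) : Prop := ∀ S, IsCosimplificationOf S M → HasMinorIso S N

/-! ### Elastic, N-elastic, N-revealing elements -/

/-- `e` is an elastic element of `M`. -/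
def Elastic (M : Matroid α) (e : α) : Prop :=
  e ∈ M.E ∧ SiConn3 (con M {e}) ∧ CoConn3 (del M {e})

/-- `e` is an `N`-elastic element of `M`. -/
def NElastic (M N : Matroid α) (e : α) : Prop :=
  Elastic M e ∧ SiHasMinor (con M {e}) N ∧ CoHasMinor (del M {e}) N

/-- `e` is an `N`-revealing element of `M`. -/
def NRevealing (M N : Matroid α) (e : α) : Prop :=
  e ∈ M.E ∧
    ((SiHasMinor (con M {e}) N ∧ ¬ SiConn3 (con M {e})) ∨
     (CoHasMinor (del M {e}) N ∧ ¬ CoConn3 (del M {e})))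

/-! ### Theta matroids and Theta-separators -/

/-- `M` is (isomorphic to) `Θ_n` or `Θ_n⁻`, with segment elements `W` and cosegment
elements `Z` (so `n = |Z|`). This is expressed by listing the circuits. -/
def ThetaParts (M : Matroid α) (W Z : Set α) : Prop :=
  M.E = W ∪ Z ∧ Disjoint W Z ∧ W.Finite ∧ Z.Finite ∧
  (W.ncard = Z.ncard ∨ W.ncard + 1 = Z.ncard) ∧
  ∃ f : α → α, Set.InjOn f W ∧ f '' W ⊆ Z ∧
    ∀ C, Circuit M C ↔
      ((C ⊆ W ∧ C.encard = 3) ∨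
       (∃ w ∈ W, C = insert w (Z \ {f w})) ∨
       (∃ w ∈ W, ∃ w' ∈ W, ∃ z ∈ Z, w ≠ w' ∧ z ≠ f w ∧ z ≠ f w' ∧
         C = insert w (insert w' (Z \ {z}))))

/-- `W ∪ Z` is a Θ-separator of `M`, where `W` is a rank-2 subset and `Z` a corank-2
subset of `E(M)`. -/
def ThetaSeparatorParts (M : Matroid α) (W Z : Set α) : Prop :=
  W ⊆ M.E ∧ Z ⊆ M.E ∧ 4 ≤ eRank M ∧ 4 ≤ eRank M✶ ∧
  eRk M W = 2 ∧ eRk M✶ Z = 2 ∧ 3 ≤ max W.ncard Z.ncard ∧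
  (ThetaParts (M ↾ (W ∪ Z)) W Z ∨ ThetaParts (M✶ ↾ (W ∪ Z)) Z W)

/-- `S` is a Θ-separator of `M`. -/
def ThetaSeparator (M : Matroid α) (S : Set α) : Prop :=
  ∃ W Z : Set α, S = W ∪ Z ∧ ThetaSeparatorParts M W Z

/-- `S` is a Θ-separator of `M` revealing the minor `N`. -/
def ThetaSeparatorRevealing (M N : Matroid α) (S : Set α) : Prop :=
  ∃ W Z : Set α, S = W ∪ Z ∧ W ⊆ M.E ∧ Z ⊆ M.E ∧ 4 ≤ eRank M ∧ 4 ≤ eRank M✶ ∧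
    eRk M W = 2 ∧ eRk M✶ Z = 2 ∧ 3 ≤ max W.ncard Z.ncard ∧
    ((ThetaParts (M ↾ (W ∪ Z)) W Z ∧ ∃ z ∈ Z, NRevealing M N z) ∨
     (ThetaParts (M✶ ↾ (W ∪ Z)) Z W ∧ ∃ w ∈ W, NRevealing M✶ N✶ w))

/-! ### Paths of 3-separations, path-width, sequential separations -/

/-- `M` has path-width three. -/
def PathWidthThree (M : Matroid α) : Prop :=
  ∃ (k : ℕ) (f : ℕ → α), Set.InjOn f (Set.Iio k) ∧ f '' (Set.Iio k) = M.E ∧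
    ∀ i ≤ k, KSeparating M 3 (f '' Set.Iio i)

/-- `(X, Y)` is a sequential 3-separation of `M`. -/
def SequentialThreeSeparation (M : Matroid α) (X Y : Set α) : Prop :=
  Disjoint X Y ∧ X ∪ Y = M.E ∧ ExactlyKSeparating M 3 X ∧
  ∃ U, (U = X ∨ U = Y) ∧ ∃ (k : ℕ) (f : ℕ → α), Set.InjOn f (Set.Iio k) ∧
    f '' (Set.Iio k) = U ∧ ∀ i ≤ k, KSeparating M 3 (f '' Set.Iio i)

/-! ### Flowers and M(K₄) -/

/-- `(P₁, P₂, P₃, P₄)` is a swirl-like flower of `M` with four petals. -/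
def SwirlLikeFlower4 (M : Matroid α) (P₁ P₂ P₃ P₄ : Set α) : Prop :=
  Disjoint P₁ P₂ ∧ Disjoint P₁ P₃ ∧ Disjoint P₁ P₄ ∧
  Disjoint P₂ P₃ ∧ Disjoint P₂ P₄ ∧ Disjoint P₃ P₄ ∧
  P₁ ∪ P₂ ∪ P₃ ∪ P₄ = M.E ∧
  2 ≤ P₁.encard ∧ 2 ≤ P₂.encard ∧ 2 ≤ P₃.encard ∧ 2 ≤ P₄.encard ∧
  KSeparating M 3 P₁ ∧ KSeparating M 3 P₂ ∧ KSeparating M 3 P₃ ∧ KSeparating M 3 P₄ ∧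
  KSeparating M 3 (P₁ ∪ P₂) ∧ KSeparating M 3 (P₂ ∪ P₃) ∧
  KSeparating M 3 (P₃ ∪ P₄) ∧ KSeparating M 3 (P₄ ∪ P₁) ∧
  eRk M P₁ + eRk M P₂ = eRk M (P₁ ∪ P₂) + 1 ∧
  eRk M P₂ + eRk M P₃ = eRk M (P₂ ∪ P₃) + 1 ∧
  eRk M P₃ + eRk M P₄ = eRk M (P₃ ∪ P₄) + 1 ∧
  eRk M P₄ + eRk M P₁ = eRk M (P₄ ∪ P₁) + 1 ∧
  eRk M P₁ + eRk M P₃ = eRk M (P₁ ∪ P₃) ∧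
  eRk M P₂ + eRk M P₄ = eRk M (P₂ ∪ P₄)

/-- `Q` is isomorphic to the cycle matroid `M(K₄)`. -/
def IsMK4 (Q : Matroid α) : Prop :=
  ∃ p q r s t u : α, ([p, q, r, s, t, u] : List α).Nodup ∧
    Q.E = {p, q, r, s, t, u} ∧
    ∀ C, Circuit Q C ↔
      C ∈ ({{p, q, s}, {p, r, t}, {q, r, u}, {s, t, u},
            {p, s, u, r}, {p, t, u, q}, {q, s, t, r}} : Set (Set α))

/-- `N` is isomorphic to the uniform matroid `U_{r,n}`. -/
def IsUnif (N : Matroid α) (r n : ℕ) : Prop :=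
  N.E.encard = (n : ℕ∞) ∧ ∀ I, N.Indep I ↔ I ⊆ N.E ∧ I.encard ≤ (r : ℕ∞)

/-! ### Fixed-basis notions -/

/-- `e` is removable with respect to the basis `B`. -/
def RemovableWrt (M : Matroid α) (B : Set α) (e : α) : Prop :=
  (e ∈ B ∧ SiConn3 (con M {e})) ∨ (e ∈ M.E \ B ∧ CoConn3 (del M {e}))

/-- `e` is `(N, B)`-robust. -/
def NBRobust (M N : Matroid α) (B : Set α) (e : α) : Prop :=
  (e ∈ B ∧ HasMinorIso (con M {e}) N) ∨ (e ∈ M.E \ B ∧ HasMinorIso (del M {e}) N)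

/-- `e` is `(N, B)`-strong. -/
def NBStrong (M N : Matroid α) (B : Set α) (e : α) : Prop :=
  (e ∈ B ∧ SiConn3 (con M {e}) ∧ SiHasMinor (con M {e}) N) ∨
  (e ∈ M.E \ B ∧ CoConn3 (del M {e}) ∧ CoHasMinor (del M {e}) N)


/-! ### Auxiliary development -/

section Aux

variable {M K P : Matroid α} {I J X Y B C D A T : Set α} {e a b c x y : α} {k n : ℕ}

/-! #### Basic facts about `eRk` -/

lemma le_eRk_of_indep (hI : M.Indep I) (hIX : I ⊆ X) : I.encard ≤ eRk M X :=
  le_biSup _ (show I ∈ {I : Set α | M.Indep I ∧ I ⊆ X} from ⟨hI, hIX⟩)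

lemma eRk_le_of_forall' {m : ℕ∞} (h : ∀ I, M.Indep I → I ⊆ X → I.encard ≤ m) : eRk M X ≤ m :=
  iSup₂_le fun I hI => h I hI.1 hI.2

lemma eRk_le_encard (M : Matroid α) (X : Set α) : eRk M X ≤ X.encard :=
  eRk_le_of_forall' fun _ _ hIX => encard_mono hIX

lemma eRk_mono (M : Matroid α) (hXY : X ⊆ Y) : eRk M X ≤ eRk M Y :=
  eRk_le_of_forall' fun _ hI hIX => le_eRk_of_indep hI (hIX.trans hXY)

lemma eRk_eq_of_basis' (hI : M.IsBasis' I X) : eRk M X = I.encard := by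
  refine le_antisymm (eRk_le_of_forall' fun J hJ hJX => ?_) (le_eRk_of_indep hI.indep hI.subset)
  obtain ⟨J', hJ', hJJ'⟩ := hJ.subset_isBasis'_of_subset hJX
  exact (encard_mono hJJ').trans (hJ'.encard_eq_encard hI).le

lemma eRk_eq_eRank (M : Matroid α) : eRk M M.E = eRank M := rfl

lemma eRank_le_encard_ground (M : Matroid α) : eRank M ≤ M.E.encard :=
  eRk_le_encard M M.E

lemma eRank_eq_of_base (hB : M.IsBase B) : eRank M = B.encard :=
  eRk_eq_of_basis' (isBasis_ground_iff.mpr hB).isBasis'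

lemma eRk_eq_eRank_of_spanning (hX : M.Spanning X) : eRk M X = eRank M := by
  obtain ⟨I, hI⟩ := M.exists_isBasis' X
  have hIb : M.IsBase I := by
    have h2 := hI.isBasis_closure_right
    rw [hX.closure_eq] at h2
    exact isBasis_ground_iff.mp h2
  rw [eRk_eq_of_basis' hI, eRank_eq_of_base hIb]

lemma eRk_lt_encard_of_dep (hdep : ¬ M.Indep X) (hfin : X.Finite) : eRk M X < X.encard := by
  obtain ⟨I, hI⟩ := M.exists_isBasis' X
  have hne : I ≠ X := fun h => hdep (h ▸ hI.indep)
  rw [eRk_eq_of_basis' hI]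
  exact (hfin.subset hI.subset).encard_lt_encard (ssubset_of_ne_of_subset hne hI.subset)

lemma eRk_ne_top [M.Finite] : eRk M X ≠ ⊤ := by
  have h : eRk M X ≤ M.E.encard :=
    eRk_le_of_forall' fun I hI _ => encard_mono hI.subset_ground
  intro ht
  rw [ht, top_le_iff] at h
  exact absurd h M.ground_finite.encard_lt_top.ne

lemma eRank_ne_top [M.Finite] : eRank M ≠ ⊤ := eRk_ne_top

/-! #### Basic facts about `del` and `con` -/

@[simp] lemma del_ground (M : Matroid α) (D : Set α) : (del M D).E = M.E \ D :=
  restrict_ground_eq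

@[simp] lemma del_indep_iff : (del M D).Indep I ↔ M.Indep I ∧ I ⊆ M.E \ D :=
  restrict_indep_iff

@[simp] lemma con_ground (M : Matroid α) (C : Set α) : (con M C).E = M.E \ C := by
  rw [con, dual_ground, del_ground, dual_ground]

lemma con_empty (M : Matroid α) : con M ∅ = M := by
  rw [con, del, diff_empty, restrict_ground_eq_self, dual_dual]

lemma dual_con (M : Matroid α) (C : Set α) : (con M C)✶ = del M✶ C := by
  rw [con, dual_dual]

lemma dual_del (M : Matroid α) (D : Set α) : (del M D)✶ = con M✶ D := by
  rw [con, dual_dual]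

/-- A helper for building a `Basis'`. -/
lemma basis'_mk (hI : M.Indep I) (hIX : I ⊆ X)
    (h : ∀ y ∈ X \ I, ¬ M.Indep (insert y I)) : M.IsBasis' I X := by
  refine ⟨⟨hI, hIX⟩, fun J hJ hIJ => fun z hz => ?_⟩
  by_contra hzI
  exact h z ⟨hJ.2 hz, hzI⟩ (hJ.1.subset (insert_subset hz hIJ))

lemma Basis'.eq_self_of_indep (hA : M.Indep A) (hJ : M.IsBasis' J A) : J = A :=
  hJ.subset.antisymm (hJ.2 ⟨hA, subset_rfl⟩ hJ.subset)

/-- Independence in a contraction. -/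
lemma con_indep_iff (hC : C ⊆ M.E) :
    (con M C).Indep I ↔ I ⊆ M.E \ C ∧ ∃ J, M.IsBasis' J C ∧ M.Indep (I ∪ J) := by
  have hg : con M C = (M✶ ↾ (M.E \ C))✶ := by rw [con, del, dual_ground]
  rw [hg, dual_indep_iff_exists']
  simp only [restrict_ground_eq, isBase_restrict_iff']
  constructor
  · rintro ⟨hIE, B, hB, hIB⟩
    obtain ⟨J, hJ⟩ := M.exists_isBasis' C
    refine ⟨hIE, J, hJ, ?_⟩
    obtain ⟨W, hW, hJW⟩ := hJ.indep.subset_isBasis'_of_subset (subset_union_right (s := I))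
    have hIJE : I ∪ J ⊆ M.E := union_subset (hIE.trans diff_subset) (hJ.subset.trans hC)
    suffices hIW : I ∪ J ⊆ W by rw [hIW.antisymm hW.subset]; exact hW.indep
    intro z hz
    by_contra hzW
    have hzI : z ∈ I := by
      rcases hz with h | h
      · exact h
      · exact absurd (hJW h) hzW
    have hzE : z ∈ M.E \ C := hIE hzI
    have hzcl : z ∈ M.closure W := by
      rw [hW.closure_eq_closure]
      exact M.subset_closure _ hIJE hz
    have hzB : z ∉ B := disjoint_left.mp hIB hzI
    have hBnot := hB.insert_not_indep (show z ∈ (M.E \ C) \ B from ⟨hzE, hzB⟩)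
    apply hBnot
    have hBE : B ⊆ M.E := hB.subset.trans diff_subset
    have hins : insert z B ⊆ M.E := insert_subset hzE.1 hBE
    rw [show (M✶.Indep (insert z B)) = M.Coindep (insert z B) from rfl,
      coindep_iff_compl_spanning hins]
    have hWsub : W ⊆ (M.E \ B) \ {z} := by
      refine subset_diff_singleton ?_ hzW
      rw [subset_diff]
      refine ⟨hW.subset.trans hIJE, Disjoint.mono_left hW.subset ?_⟩
      refine disjoint_union_left.mpr ⟨hIB, ?_⟩
      exact disjoint_left.mpr fun z hzJ hzB => (hB.subset hzB).2 (hJ.subset hzJ)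
    have hz2 : z ∈ M.closure ((M.E \ B) \ {z}) := M.closure_subset_closure hWsub hzcl
    have hcl : M.closure ((M.E \ B) \ {z}) = M.closure (M.E \ B) := by
      rw [← closure_insert_eq_of_mem_closure hz2, insert_diff_singleton,
        insert_eq_of_mem (show z ∈ M.E \ B from ⟨hzE.1, hzB⟩)]
    have hsp : M.Spanning (M.E \ B) :=
      (coindep_iff_compl_spanning hBE).mp (coindep_def.mpr hB.indep)
    have hset : M.E \ insert z B = (M.E \ B) \ {z} := by
      rw [insert_eq, union_comm, ← diff_diff]
    rw [hset]
    exact (spanning_iff_closure_eq (diff_subset.trans diff_subset)).mpr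
      (by rw [hcl, hsp.closure_eq])
  · rintro ⟨hIE, J, hJ, hIJ⟩
    obtain ⟨B₀, hB₀, hsub⟩ := hIJ.exists_isBase_superset
    have hJB₀ : J ⊆ B₀ := subset_union_right.trans hsub
    have hBCE : B₀ ∪ C ⊆ M.E := union_subset hB₀.subset_ground hC
    have hEB' : M.E \ (M.E \ (B₀ ∪ C)) = B₀ ∪ C := diff_diff_cancel_left hBCE
    refine ⟨hIE, M.E \ (B₀ ∪ C), ?_, ?_⟩
    · refine basis'_mk ?_ (diff_subset_diff_right subset_union_right) ?_
      · refine coindep_def.mp ((coindep_iff_compl_spanning diff_subset).mpr ?_)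
        rw [hEB']
        exact hB₀.spanning_of_superset subset_union_left hBCE
      · rintro z ⟨hz1, hz2⟩ hind
        have hzE : z ∈ M.E := hz1.1
        have hzC : z ∉ C := hz1.2
        have hzB₀ : z ∈ B₀ := by
          have : z ∈ B₀ ∪ C := by
            by_contra h
            exact hz2 ⟨hzE, h⟩
          exact this.resolve_right hzC
        have hsp2 : M.Spanning (M.E \ insert z (M.E \ (B₀ ∪ C))) :=
          (coindep_iff_compl_spanning (insert_subset hzE diff_subset)).mp (coindep_def.mpr hind)
        have hsubcl : M.E \ insert z (M.E \ (B₀ ∪ C)) ⊆ M.closure (B₀ \ {z}) := by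
          rintro w ⟨hwE, hw⟩
          have hwz : w ≠ z := fun h => hw (h ▸ mem_insert _ _)
          have hwB' : w ∉ M.E \ (B₀ ∪ C) := fun h => hw (mem_insert_of_mem _ h)
          have hwBC : w ∈ B₀ ∪ C := by
            by_contra h
            exact hwB' ⟨hwE, h⟩
          by_cases hwC : w ∈ C
          · have hw1 : w ∈ M.closure J := by
              rw [hJ.closure_eq_closure]
              exact M.subset_closure C hC hwC
            refine M.closure_subset_closure (subset_diff_singleton hJB₀ ?_) hw1
            exact fun h => hzC (hJ.subset h)
          · exact M.subset_closure _ (diff_subset.trans hB₀.subset_ground)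
              ⟨hwBC.resolve_right hwC, hwz⟩
        have hE : M.E ⊆ M.closure (B₀ \ {z}) := by
          rw [← hsp2.closure_eq]
          exact closure_subset_closure_of_subset_closure hsubcl
        exact hB₀.indep.notMem_closure_diff_of_mem hzB₀ (hE hzE)
    · exact disjoint_left.mpr fun z hzI hzB' => hzB'.2 (Or.inl (hsub (Or.inl hzI)))

end Aux
section Aux2

variable {M K P : Matroid α} {I J X Y B C D A T : Set α} {e a b c x y : α} {k n : ℕ}

/-- Deletion and contraction commute. -/
lemma del_con_comm (hC : C ⊆ M.E) (hD : D ⊆ M.E) (hdisj : Disjoint C D) :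
    del (con M C) D = con (del M D) C := by
  have hCD : C ⊆ M.E \ D := subset_diff.mpr ⟨hC, hdisj⟩
  refine ext_indep ?_ fun I hI => ?_
  · rw [del_ground, con_ground, con_ground, del_ground, diff_diff, diff_diff, union_comm]
  · rw [del_ground, con_ground] at hI
    have hIEC : I ⊆ M.E \ C := hI.trans diff_subset
    have hIED : I ⊆ M.E \ D := fun z hz => ⟨(hI hz).1.1, (hI hz).2⟩
    have hIEDC : I ⊆ (M.E \ D) \ C := fun z hz => ⟨⟨(hI hz).1.1, (hI hz).2⟩, (hI hz).1.2⟩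
    rw [del_indep_iff, con_ground, con_indep_iff hC,
      con_indep_iff (show C ⊆ (del M D).E by rwa [del_ground]), del_ground]
    constructor
    · rintro ⟨⟨-, J, hJ, hIJ⟩, -⟩
      refine ⟨hIEDC, J, ?_, ?_⟩
      · rw [del, isBasis'_restrict_iff, inter_eq_self_of_subset_left hCD]
        exact ⟨hJ, hJ.subset.trans hCD⟩
      · rw [del_indep_iff]
        exact ⟨hIJ, union_subset hIED (hJ.subset.trans hCD)⟩
    · rintro ⟨-, J, hJ, hIJ⟩
      rw [del, isBasis'_restrict_iff, inter_eq_self_of_subset_left hCD] at hJ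
      rw [del_indep_iff] at hIJ
      exact ⟨⟨hIEC, J, hJ.1, hIJ.1⟩, hI⟩

/-- The key duality identity for ranks. -/
lemma eRk_dual_add_eRank (M : Matroid α) (hX : X ⊆ M.E) :
    eRk M✶ X + eRank M = X.encard + eRk M (M.E \ X) := by
  obtain ⟨I, hI⟩ := M.exists_isBasis' (M.E \ X)
  obtain ⟨B, hB, hIB⟩ := hI.indep.exists_isBase_superset
  have hBX : B ∩ (M.E \ X) = I :=
    (hI.eq_of_subset_indep (hB.indep.inter_right _) (subset_inter hIB hI.subset)
      inter_subset_right).symm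
  have hBsplit : B = I ∪ (B ∩ X) := by
    apply subset_antisymm
    · intro z hz
      by_cases hzX : z ∈ X
      · exact Or.inr ⟨hz, hzX⟩
      · exact Or.inl (hBX ▸ ⟨hz, hB.subset_ground hz, hzX⟩)
    · exact union_subset hIB inter_subset_left
  have hIX : Disjoint I (B ∩ X) := by
    refine disjoint_left.mpr fun z hzI hzBX => ?_
    rw [← hBX] at hzI
    exact hzI.2.2 hzBX.2
  -- X \ B is a basis' of X in the dual
  have hbasis : M✶.IsBasis' (X \ B) X := by
    refine basis'_mk ?_ diff_subset ?_
    · refine coindep_def.mp ((coindep_iff_compl_spanning (diff_subset.trans hX)).mpr ?_)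
      refine hB.spanning_of_superset (fun z hz => ⟨hB.subset_ground hz, fun h => h.2 hz⟩)
        diff_subset
    · rintro z ⟨hzX, hz2⟩ hind
      have hzB : z ∈ B := by
        by_contra h
        exact hz2 ⟨hzX, h⟩
      have hzE : z ∈ M.E := hB.subset_ground hzB
      have hsp2 : M.Spanning (M.E \ insert z (X \ B)) :=
        (coindep_iff_compl_spanning (insert_subset hzE (diff_subset.trans hX))).mp
          (coindep_def.mpr hind)
      have hsubcl : M.E \ insert z (X \ B) ⊆ M.closure (B \ {z}) := by
        rintro w ⟨hwE, hw⟩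
        have hwz : w ≠ z := fun h => hw (h ▸ mem_insert _ _)
        by_cases hwX : w ∈ X
        · have hwB : w ∈ B := by
            by_contra h
            exact hw (mem_insert_of_mem _ ⟨hwX, h⟩)
          exact M.subset_closure _ (diff_subset.trans hB.subset_ground) ⟨hwB, hwz⟩
        · have hwcl : w ∈ M.closure I := by
            rw [hI.closure_eq_closure]
            exact M.subset_closure _ diff_subset ⟨hwE, hwX⟩
          refine M.closure_subset_closure (subset_diff_singleton hIB ?_) hwcl
          intro hzI
          rw [← hBX] at hzI
          exact hzI.2.2 hzX
      have hE : M.E ⊆ M.closure (B \ {z}) := by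
        rw [← hsp2.closure_eq]
        exact closure_subset_closure_of_subset_closure hsubcl
      exact hB.indep.notMem_closure_diff_of_mem hzB (hE hzE)
  rw [eRk_eq_of_basis' hbasis, eRank_eq_of_base hB, eRk_eq_of_basis' hI]
  have hcard : B.encard = I.encard + (B ∩ X).encard := by
    nth_rewrite 1 [hBsplit]
    rw [encard_union_eq hIX]
  rw [hcard]
  calc (X \ B).encard + (I.encard + (B ∩ X).encard)
      = ((X \ B).encard + (X ∩ B).encard) + I.encard := by rw [inter_comm X B]; ring
    _ = X.encard + I.encard := by rw [encard_diff_add_encard_inter]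

lemma eRank_dual_add_eRank (M : Matroid α) : eRank M✶ + eRank M = M.E.encard := by
  have h := eRk_dual_add_eRank M (subset_refl M.E)
  rw [diff_self] at h
  have h0 : eRk M ∅ = 0 := by
    refine le_antisymm (eRk_le_of_forall' fun I _ hI => ?_) zero_le
    rw [subset_empty_iff.mp hI, encard_empty]
  rw [h0, add_zero] at h
  exact h

/-- `KSeparating` is preserved under duality (one direction). -/
lemma kSeparating_of_dual [M.Finite] (hX : X ⊆ M.E) (h : KSeparating M✶ k X) :
    KSeparating M k X := by
  unfold KSeparating at h ⊢
  rw [dual_ground] at h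
  have h1 := eRk_dual_add_eRank M hX
  have h2 := eRk_dual_add_eRank M (diff_subset (s := M.E) (t := X))
  rw [diff_diff_cancel_left hX] at h2
  have h3 := eRank_dual_add_eRank M
  have h4 := encard_diff_add_encard_of_subset hX
  have hgfin := M.ground_finite
  -- lift everything to ℕ
  lift eRank M to ℕ using eRank_ne_top with r hr
  lift eRank M✶ to ℕ using eRank_ne_top with rd hrd
  lift eRk M X to ℕ using eRk_ne_top with aa haa
  lift eRk M (M.E \ X) to ℕ using eRk_ne_top with bb hbb
  lift eRk M✶ X to ℕ using eRk_ne_top with ad had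
  lift eRk M✶ (M.E \ X) to ℕ using eRk_ne_top with bd hbd
  lift X.encard to ℕ using (hgfin.subset hX).encard_lt_top.ne with xx hxx
  lift (M.E \ X).encard to ℕ using (hgfin.subset diff_subset).encard_lt_top.ne with yy hyy
  lift M.E.encard to ℕ using hgfin.encard_lt_top.ne with ee hee
  have h1' : ad + r = xx + bb := by exact_mod_cast h1
  have h2' : bd + r = yy + aa := by exact_mod_cast h2
  have h3' : rd + r = ee := by exact_mod_cast h3
  have h4' : yy + xx = ee := by exact_mod_cast h4
  have h' : ad + bd + 1 ≤ rd + k := by exact_mod_cast h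
  have hfin : aa + bb + 1 ≤ r + k := by omega
  exact_mod_cast hfin

end Aux2
section Aux3

variable {M K P : Matroid α} {I J X Y B C D A T : Set α} {e a b c x y : α} {k n : ℕ}

lemma one_le_encard_diff_singleton (h2 : 2 ≤ M.E.encard) (he : e ∈ M.E) :
    1 ≤ (M.E \ {e}).encard := by
  obtain ⟨b, hb, hbe⟩ := exists_ne_of_one_lt_encard (lt_of_lt_of_le (by norm_num : (1:ℕ∞) < 2) h2) e
  exact one_le_encard_iff_nonempty.mpr ⟨b, hb, hbe⟩

/-- A 3-connected matroid with at least 2 elements has no loops. -/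
lemma indep_singleton_of_threeConnected (h3 : ThreeConnected M) (h2 : 2 ≤ M.E.encard)
    (he : e ∈ M.E) : M.Indep {e} := by
  by_contra hdep
  refine h3 1 {e} (M.E \ {e}) (by norm_num) ?_
  refine ⟨disjoint_sdiff_right, union_diff_cancel (singleton_subset_iff.mpr he), ?_, by simp,
    by simpa using one_le_encard_diff_singleton h2 he⟩
  unfold KSeparating
  have h0 : eRk M {e} = 0 := by
    refine le_antisymm (eRk_le_of_forall' fun I hI hIe => ?_) zero_le
    rcases subset_singleton_iff_eq.mp hIe with rfl | rfl
    · simp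
    · exact absurd hI hdep
  rw [h0, zero_add]
  exact add_le_add (eRk_mono M diff_subset) (by norm_num)

/-- The ground set of a 3-connected matroid with at least 2 elements is dependent. -/
lemma ground_dep_of_threeConnected (h3 : ThreeConnected M) (h2 : 2 ≤ M.E.encard) :
    ¬ M.Indep M.E := by
  intro hE
  obtain ⟨e, he⟩ := one_le_encard_iff_nonempty.mp ((by norm_num : (1:ℕ∞) ≤ 2).trans h2)
  refine h3 1 {e} (M.E \ {e}) (by norm_num) ?_
  refine ⟨disjoint_sdiff_right, union_diff_cancel (singleton_subset_iff.mpr he), ?_, by simp,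
    by simpa using one_le_encard_diff_singleton h2 he⟩
  unfold KSeparating
  have ha : eRk M {e} ≤ 1 := (eRk_le_encard M {e}).trans (by simp)
  have hb : eRk M (M.E \ {e}) ≤ (M.E \ {e}).encard := eRk_le_encard _ _
  have hrk : M.E.encard ≤ eRank M := le_eRk_of_indep hE (subset_refl _)
  have hsum : (M.E \ {e}).encard + 1 = M.E.encard := encard_diff_singleton_add_one he
  calc eRk M {e} + eRk M (M.E \ {e}) + 1
      ≤ 1 + (M.E \ {e}).encard + 1 := add_le_add (add_le_add ha hb) (le_refl 1)
    _ = ((M.E \ {e}).encard + 1) + 1 := by ring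
    _ = M.E.encard + 1 := by rw [hsum]
    _ ≤ eRank M + 1 := add_le_add hrk (le_refl 1)

/-- A 3-connected matroid with at least 4 elements has no dependent pairs. -/
lemma pair_indep_of_threeConnected (h3 : ThreeConnected M) (h4 : 4 ≤ M.E.encard)
    (ha : a ∈ M.E) (hb : b ∈ M.E) (hab : a ≠ b) : M.Indep {a, b} := by
  by_contra hdep
  have hsub : ({a, b} : Set α) ⊆ M.E := by simp [insert_subset_iff, ha, hb]
  refine h3 2 {a, b} (M.E \ {a, b}) (by norm_num) ?_
  have hcompl : 2 ≤ (M.E \ {a, b}).encard := by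
    have hs := encard_diff_add_encard_of_subset hsub
    rw [encard_pair hab] at hs
    have : (2 : ℕ∞) + 2 ≤ (M.E \ {a, b}).encard + 2 := by rw [hs]; exact le_trans (by norm_num) h4
    exact (WithTop.add_le_add_iff_right (show (2:ℕ∞) ≠ ⊤ by simp)).mp this
  refine ⟨disjoint_sdiff_right, union_diff_cancel hsub, ?_, by simp [encard_pair hab], by
    simpa using hcompl⟩
  unfold KSeparating
  have h1 : eRk M {a, b} + 1 ≤ 2 := by
    have hlt := eRk_lt_encard_of_dep hdep ((finite_singleton b).insert a)
    rw [encard_pair hab] at hlt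
    exact Order.add_one_le_of_lt hlt
  have h2 : eRk M (M.E \ {a, b}) ≤ eRank M := eRk_mono M diff_subset
  calc eRk M {a, b} + eRk M (M.E \ {a, b}) + 1
      = (eRk M {a, b} + 1) + eRk M (M.E \ {a, b}) := by ring
    _ ≤ 2 + eRank M := add_le_add h1 h2
    _ = eRank M + (2 : ℕ) := by push_cast; ring

/-- Duality of 3-connectedness. -/
lemma threeConnected_dual [M.Finite] (h3 : ThreeConnected M) : ThreeConnected M✶ := by
  rintro k X Y hk ⟨hdisj, hunion, hs, hx, hy⟩
  rw [dual_ground] at hunion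
  exact h3 k X Y hk
    ⟨hdisj, hunion, kSeparating_of_dual (hunion ▸ subset_union_left) hs, hx, hy⟩

/-- Every finite dependent matroid contains a "circuit". -/
lemma exists_circuit_of_dep [M.Finite] (hdep : ¬ M.Indep M.E) :
    ∃ C, C ⊆ M.E ∧ ¬ M.Indep C ∧ ∀ D, D ⊂ C → M.Indep D := by
  have hfin : {D : Set α | D ⊆ M.E ∧ ¬ M.Indep D}.Finite :=
    Set.Finite.subset M.ground_finite.finite_subsets (fun D hD => hD.1)
  obtain ⟨C, hCm⟩ := Set.Finite.exists_minimal hfin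
    ⟨M.E, subset_refl _, hdep⟩
  refine ⟨C, hCm.prop.1, hCm.prop.2, fun D hDC => ?_⟩
  by_contra hD
  exact hDC.ne (hCm.eq_of_le ⟨hDC.subset.trans hCm.prop.1, hD⟩ hDC.subset)

/-- A circuit of a 3-connected matroid with at least 4 elements has ≥ 3 elements. -/
lemma circuit_three (h3 : ThreeConnected M) (h4 : 4 ≤ M.E.encard) (hCE : C ⊆ M.E)
    (hdep : ¬ M.Indep C) (hmin : ∀ D, D ⊂ C → M.Indep D) :
    ∃ a b c, a ≠ b ∧ a ≠ c ∧ b ≠ c ∧ {a, b, c} ⊆ C := by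
  have h2 : 2 ≤ M.E.encard := le_trans (by norm_num) h4
  obtain ⟨a, haC⟩ : C.Nonempty :=
    nonempty_iff_ne_empty.mpr (fun h => hdep (h ▸ M.empty_indep))
  have hCa : C ≠ {a} := by
    rintro rfl
    exact hdep (indep_singleton_of_threeConnected h3 h2 (hCE rfl))
  obtain ⟨b, hbC, hba⟩ : ∃ b ∈ C, b ≠ a := by
    by_contra h
    push_neg at h
    exact hCa (subset_antisymm (fun z hz => h z hz) (singleton_subset_iff.mpr haC))
  have hCab : C ≠ {a, b} := by
    rintro rfl
    exact hdep (pair_indep_of_threeConnected h3 h4 (hCE (by simp)) (hCE (by simp)) hba.symm)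
  obtain ⟨c, hcC, hc⟩ : ∃ c ∈ C, c ∉ ({a, b} : Set α) := by
    by_contra h
    push_neg at h
    exact hCab (subset_antisymm (fun z hz => h z hz)
      (insert_subset haC (singleton_subset_iff.mpr hbC)))
  refine ⟨a, b, c, hba.symm, fun h => hc (by simp [← h]), fun h => hc (by simp [← h]), ?_⟩
  exact insert_subset haC (insert_subset hbC (singleton_subset_iff.mpr hcC))

end Aux3
section Aux4

variable {M K P : Matroid α} {I J X Y B C D A T : Set α} {e a b c x y : α} {k n : ℕ}

lemma unif_of_ground (hE : K.E = T) (hT : T.encard = ((n + 1 : ℕ) : ℕ∞))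
    (h : ∀ I, K.Indep I ↔ I ⊆ T ∧ I ≠ T) : IsUnif K n (n + 1) := by
  have hTfin : T.Finite := finite_of_encard_eq_coe hT
  refine ⟨by rw [hE, hT], fun I => ?_⟩
  rw [h I, hE]
  constructor
  · rintro ⟨hIT, hne⟩
    refine ⟨hIT, ?_⟩
    have hlt := (hTfin.subset hIT).encard_lt_encard (ssubset_of_ne_of_subset hne hIT)
    rw [hT] at hlt
    have h1 := Order.add_one_le_of_lt hlt
    have h2 : ((n + 1 : ℕ) : ℕ∞) = (n : ℕ∞) + 1 := by push_cast; ring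
    rw [h2] at h1
    exact (WithTop.add_le_add_iff_right (show (1:ℕ∞) ≠ ⊤ by simp)).mp h1
  · rintro ⟨hIT, hle⟩
    refine ⟨hIT, fun hEq => ?_⟩
    rw [hEq, hT] at hle
    norm_cast at hle
    omega

/-- The fundamental minor construction from a circuit: restrict the circuit to `T` after
contracting the rest of it.  The result is the uniform matroid `U_{|T|-1, |T|}` on `T`. -/
lemma circuit_minor (hCE : C ⊆ K.E) (hdep : ¬ K.Indep C) (hmin : ∀ D, D ⊂ C → K.Indep D)
    (hTC : T ⊆ C) (hTne : T.Nonempty) :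
    ∃ K', IsMinorOf K' K ∧ K'.E = T ∧ ∀ I, (K'.Indep I ↔ I ⊆ T ∧ I ≠ T) := by
  have hAC : C \ T ⊂ C := by
    obtain ⟨t, ht⟩ := hTne
    exact (ssubset_iff_of_subset diff_subset).mpr ⟨t, hTC ht, fun h => h.2 ht⟩
  have hAind : K.Indep (C \ T) := hmin _ hAC
  have hAE : C \ T ⊆ K.E := diff_subset.trans hCE
  have hTE : T ⊆ K.E := hTC.trans hCE
  have hTgr : T ⊆ K.E \ (C \ T) := fun z hz => ⟨hTE hz, fun h => h.2 hz⟩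
  refine ⟨del (con K (C \ T)) ((K.E \ (C \ T)) \ T), ⟨C \ T, _, rfl⟩, ?_, ?_⟩
  · rw [del_ground, con_ground, diff_diff_cancel_left hTgr]
  · intro I
    rw [del_indep_iff, con_ground, con_indep_iff hAE, diff_diff_cancel_left hTgr]
    constructor
    · rintro ⟨⟨hIEA, J, hJ, hIJ⟩, hIT⟩
      have hJA := Basis'.eq_self_of_indep hAind hJ
      subst hJA
      refine ⟨hIT, fun hEq => hdep ?_⟩
      have hUC : I ∪ (C \ T) = C := by rw [hEq]; exact union_diff_cancel hTC
      exact hUC ▸ hIJ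
    · rintro ⟨hIT, hne⟩
      have hIC : I ⊆ C := hIT.trans hTC
      refine ⟨⟨hIT.trans hTgr, C \ T, hAind.isBasis_self.isBasis', ?_⟩, hIT⟩
      refine hmin _ (ssubset_of_ne_of_subset ?_ (union_subset hIC diff_subset))
      intro hEq
      apply hne
      refine subset_antisymm hIT fun t ht => ?_
      have hC : t ∈ I ∪ (C \ T) := by rw [hEq]; exact hTC ht
      rcases hC with h | h
      · exact h
      · exact absurd ht h.2

lemma unif11_minor (hx : K.Indep {x}) : ∃ K', IsMinorOf K' K ∧ IsUnif K' 1 1 := by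
  have hxE : x ∈ K.E := singleton_subset_iff.mp hx.subset_ground
  refine ⟨del (con K ∅) (K.E \ {x}), ⟨∅, _, rfl⟩, ?_, fun I => ?_⟩
  · rw [del_ground, con_empty, diff_diff_cancel_left (singleton_subset_iff.mpr hxE),
      encard_singleton]
    norm_num
  · simp only [con_empty, del_indep_iff, del_ground,
      diff_diff_cancel_left (singleton_subset_iff.mpr hxE)]
    constructor
    · rintro ⟨hI, hIx⟩
      exact ⟨hIx, (encard_mono hIx).trans (by simp)⟩
    · rintro ⟨hIx, -⟩
      rcases subset_singleton_iff_eq.mp hIx with rfl | rfl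
      · exact ⟨K.empty_indep, empty_subset _⟩
      · exact ⟨hx, subset_refl _⟩

lemma unif00_minor (K : Matroid α) : ∃ K', IsMinorOf K' K ∧ IsUnif K' 0 0 := by
  refine ⟨del (con K ∅) K.E, ⟨∅, _, rfl⟩, ?_, fun I => ?_⟩
  · rw [del_ground, con_empty, diff_self, encard_empty]
    norm_num
  · simp only [con_empty, del_indep_iff, del_ground, diff_self]
    constructor
    · rintro ⟨-, hI⟩
      simp [subset_empty_iff.mp hI]
    · rintro ⟨hI, -⟩
      simp only [subset_empty_iff.mp hI]
      exact ⟨K.empty_indep, empty_subset _⟩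

/-- In `U_{2,3}`, the bases are exactly the 2-element subsets of the ground set. -/
lemma isUnif23_base_iff (h : IsUnif P 2 3) : P.IsBase B ↔ B ⊆ P.E ∧ B.encard = 2 := by
  have hfin : P.E.Finite := finite_of_encard_eq_coe h.1
  constructor
  · intro hB
    have hBi := hB.indep
    have hBE := hBi.subset_ground
    have hle : B.encard ≤ 2 := ((h.2 B).mp hBi).2
    refine ⟨hBE, le_antisymm hle ?_⟩
    by_contra hlt
    push_neg at hlt
    have hB1 : B.encard + 1 ≤ 2 := Order.add_one_le_of_lt hlt
    obtain ⟨z, hzE, hzB⟩ : ∃ z ∈ P.E, z ∉ B := by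
      by_contra hcon
      push_neg at hcon
      have : P.E.encard ≤ B.encard := encard_mono (fun z hz => hcon z hz)
      rw [h.1] at this
      have := this.trans hle
      norm_num at this
    have hins : P.Indep (insert z B) := by
      refine (h.2 _).mpr ⟨insert_subset hzE hBE, ?_⟩
      calc (insert z B).encard ≤ B.encard + 1 := encard_insert_le _ _
        _ ≤ 2 := hB1
    have := hB.eq_of_subset_indep hins (subset_insert _ _)
    exact hzB (this ▸ mem_insert _ _)
  · rintro ⟨hBE, hB2⟩
    have hBi : P.Indep B := (h.2 B).mpr ⟨hBE, by rw [hB2]; norm_num⟩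
    obtain ⟨B₀, hB₀, hBB₀⟩ := hBi.exists_isBase_superset
    have hB₀2 : B₀.encard = 2 := by
      have hle : B₀.encard ≤ 2 := ((h.2 B₀).mp hB₀.indep).2
      -- reuse the forward direction argument: any base has encard 2
      by_contra hne
      have hlt : B₀.encard < 2 := lt_of_le_of_ne hle hne
      have hlt2 : B.encard < 2 := by
        calc B.encard ≤ B₀.encard := encard_mono hBB₀
          _ < 2 := hlt
      rw [hB2] at hlt2
      exact lt_irrefl _ hlt2
    rw [show B = B₀ from Finite.eq_of_subset_of_encard_le
      (hfin.subset (hBB₀.trans hB₀.indep.subset_ground)) hBB₀ (by rw [hB2, hB₀2])]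
    exact hB₀

lemma isUnif_dual_23 (h : IsUnif P 2 3) : IsUnif P✶ 1 3 := by
  have hfin : P.E.Finite := finite_of_encard_eq_coe h.1
  refine ⟨by rw [dual_ground]; exact_mod_cast h.1, fun I => ?_⟩
  rw [dual_ground]
  rw [dual_indep_iff_exists']
  constructor
  · rintro ⟨hIE, B, hB, hdisj⟩
    obtain ⟨hBE, hB2⟩ := (isUnif23_base_iff h).mp hB
    refine ⟨hIE, ?_⟩
    have hsub : I ⊆ P.E \ B := subset_diff.mpr ⟨hIE, hdisj⟩
    have hEB : (P.E \ B).encard + B.encard = P.E.encard := encard_diff_add_encard_of_subset hBE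
    rw [hB2, h.1] at hEB
    have hEB1 : (P.E \ B).encard = 1 := by
      lift (P.E \ B).encard to ℕ using (hfin.subset diff_subset).encard_lt_top.ne with m hm
      norm_cast at hEB ⊢
      omega
    calc I.encard ≤ (P.E \ B).encard := encard_mono hsub
      _ = 1 := hEB1
  · rintro ⟨hIE, hI1⟩
    have hEI : (P.E \ I).encard + I.encard = P.E.encard := encard_diff_add_encard_of_subset hIE
    have h2 : 2 ≤ (P.E \ I).encard := by
      rw [h.1] at hEI
      lift I.encard to ℕ using (hfin.subset hIE).encard_lt_top.ne with m hm
      lift (P.E \ I).encard to ℕ using (hfin.subset diff_subset).encard_lt_top.ne with m' hm'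
      have hI1' : m ≤ 1 := by exact_mod_cast hI1
      have hEI' : m' + m = 3 := by exact_mod_cast hEI
      exact_mod_cast (by omega : 2 ≤ m')
    obtain ⟨B, hBsub, hB2⟩ := exists_subset_encard_eq h2
    refine ⟨hIE, B, (isUnif23_base_iff h).mpr ⟨hBsub.trans diff_subset, hB2⟩, ?_⟩
    exact disjoint_left.mpr fun z hzI hzB => (hBsub hzB).2 hzI

end Aux4
section Aux5

variable {M K P : Matroid α} {I J X Y B C D A T : Set α} {e a b c x y u v : α} {k n : ℕ}

lemma encard_le_two_cases (h : I.encard ≤ 2) :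
    I = ∅ ∨ (∃ a, I = {a}) ∨ ∃ a b, a ≠ b ∧ I = {a, b} := by
  by_cases h1 : I.encard ≤ 1
  · rcases encard_le_one_iff_eq.mp h1 with h' | h'
    · exact Or.inl h'
    · exact Or.inr (Or.inl h')
  · push_neg at h1
    have h1b := Order.add_one_le_of_lt h1
    have h11 : (1 : ℕ∞) + 1 = 2 := by norm_num
    have h2 : I.encard = 2 := le_antisymm h (h11 ▸ h1b)
    exact Or.inr (Or.inr (encard_eq_two.mp h2))

/-- Two uniform matroids of the same type are isomorphic. -/
lemma iso_of_unif {r m : ℕ} (h1 : IsUnif M r m) (h2 : IsUnif K r m) : Iso M K := by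
  have hMfin : M.E.Finite := finite_of_encard_eq_coe h1.1
  have hcard : M.E.encard = K.E.encard := h1.1.trans h2.1.symm
  by_cases hne : M.E.Nonempty
  · obtain ⟨a0, -⟩ := hne
    haveI : Nonempty α := ⟨a0⟩
    obtain ⟨f, hf⟩ := hMfin.exists_bijOn_of_encard_eq hcard
    refine ⟨f, hf, fun I hI => ?_⟩
    rw [h1.2, h2.2]
    have himg : f '' I ⊆ K.E := (image_mono hI).trans hf.image_eq.subset
    have hcardI : (f '' I).encard = I.encard := (hf.injOn.mono hI).encard_image
    constructor
    · rintro ⟨-, hle⟩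
      exact ⟨himg, by rwa [hcardI]⟩
    · rintro ⟨-, hle⟩
      exact ⟨hI, by rwa [hcardI] at hle⟩
  · have hME : M.E = ∅ := not_nonempty_iff_eq_empty.mp hne
    have hKE : K.E = ∅ := by
      rw [← encard_eq_zero, ← hcard, hME, encard_empty]
    refine ⟨id, by rw [hME, hKE]; exact bijOn_id ∅, fun I hI => ?_⟩
    rw [hME, subset_empty_iff] at hI
    subst hI
    rw [image_id]
    exact iff_of_true M.empty_indep K.empty_indep

/-- Classification of 3-connected matroids on at most three elements. -/
lemma encard_cases_of_le_three {T : Set α} (h : T.encard ≤ 3) :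
    T.encard = 0 ∨ T.encard = 1 ∨ T.encard = 2 ∨ T.encard = 3 := by
  have hfin : T.Finite := by
    rw [← encard_ne_top_iff]
    intro ht
    rw [ht] at h
    exact absurd (top_le_iff.mp h).symm (by norm_num)
  lift T.encard to ℕ using hfin.encard_lt_top.ne with m hm
  have hm3 : m ≤ 3 := by exact_mod_cast h
  have hm4 : m = 0 ∨ m = 1 ∨ m = 2 ∨ m = 3 := by omega
  rcases hm4 with rfl | rfl | rfl | rfl <;> simp

lemma classify_small (hP3 : ThreeConnected P) (hsmall : P.E.encard ≤ 3) :
    IsUnif P 0 0 ∨ IsUnif P 0 1 ∨ IsUnif P 1 1 ∨ IsUnif P 1 2 ∨ IsUnif P 1 3 ∨ IsUnif P 2 3 := by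
  have hfin : P.E.Finite := by
    rw [← encard_ne_top_iff]
    intro h
    rw [h] at hsmall
    exact absurd (top_le_iff.mp hsmall).symm (by norm_num)
  have hcases := encard_cases_of_le_three hsmall
  rcases hcases with hm | hm | hm | hm
  -- m = 0
  · have hE : P.E = ∅ := encard_eq_zero.mp hm
    refine Or.inl ⟨by rw [hm]; norm_cast, fun I => ?_⟩
    constructor
    · intro hI
      have h0 : I = ∅ := subset_empty_iff.mp (hE ▸ hI.subset_ground)
      simp [h0, hE]
    · rintro ⟨hIE, -⟩
      rw [hE, subset_empty_iff] at hIE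
      exact hIE ▸ P.empty_indep
  -- m = 1
  · obtain ⟨w, hw⟩ := encard_eq_one.mp hm
    by_cases hl : P.Indep {w}
    · refine Or.inr (Or.inr (Or.inl ⟨by rw [hm]; norm_cast, fun I => ?_⟩))
      constructor
      · intro hI
        refine ⟨hI.subset_ground, ?_⟩
        calc I.encard ≤ P.E.encard := encard_mono hI.subset_ground
          _ = 1 := hm
      · rintro ⟨hIE, -⟩
        rw [hw] at hIE
        rcases subset_singleton_iff_eq.mp hIE with rfl | rfl
        · exact P.empty_indep
        · exact hl
    · refine Or.inr (Or.inl ⟨by rw [hm]; norm_cast, fun I => ?_⟩)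
      constructor
      · intro hI
        have hIE := hI.subset_ground
        rw [hw] at hIE
        rcases subset_singleton_iff_eq.mp hIE with rfl | rfl
        · exact ⟨empty_subset _, by simp⟩
        · exact absurd hI hl
      · rintro ⟨hIE, hle⟩
        have h0 : I = ∅ := by
          rw [← encard_eq_zero]
          exact le_antisymm (by exact_mod_cast hle) zero_le
        exact h0 ▸ P.empty_indep
  -- m = 2
  · obtain ⟨w, v', hwv, hE⟩ := encard_eq_two.mp hm
    have h2 : 2 ≤ P.E.encard := by rw [hm]
    have hdepE := ground_dep_of_threeConnected hP3 h2
    refine Or.inr (Or.inr (Or.inr (Or.inl ⟨by rw [hm]; norm_cast, fun I => ?_⟩)))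
    constructor
    · intro hI
      refine ⟨hI.subset_ground, ?_⟩
      have hne : I ≠ P.E := fun h => hdepE (h ▸ hI)
      have hlt := (hfin.subset hI.subset_ground).encard_lt_encard (ssubset_of_ne_of_subset hne hI.subset_ground)
      rw [hm] at hlt
      have := Order.add_one_le_of_lt hlt
      have h12 : (2 : ℕ∞) = 1 + 1 := by norm_num
      rw [h12] at this
      exact (WithTop.add_le_add_iff_right (by norm_num : (1:ℕ∞) ≠ ⊤)).mp this
    · rintro ⟨hIE, hle⟩
      rcases encard_le_one_iff_eq.mp (by exact_mod_cast hle) with rfl | ⟨z, rfl⟩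
      · exact P.empty_indep
      · exact indep_singleton_of_threeConnected hP3 h2 (hIE rfl)
  -- m = 3
  · obtain ⟨p, q, s, hpq, hps, hqs, hE⟩ := encard_eq_three.mp hm
    have h2 : 2 ≤ P.E.encard := by rw [hm]; norm_num
    have hsing : ∀ w ∈ P.E, P.Indep {w} :=
      fun w hw => indep_singleton_of_threeConnected hP3 h2 hw
    by_cases hp2 : ∀ u ∈ P.E, ∀ v ∈ P.E, u ≠ v → P.Indep {u, v}
    · -- U_{2,3}
      have hdepE := ground_dep_of_threeConnected hP3 h2
      refine Or.inr (Or.inr (Or.inr (Or.inr (Or.inr ⟨by rw [hm]; norm_cast, fun I => ?_⟩))))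
      constructor
      · intro hI
        refine ⟨hI.subset_ground, ?_⟩
        have hne : I ≠ P.E := fun h => hdepE (h ▸ hI)
        have hlt := (hfin.subset hI.subset_ground).encard_lt_encard (ssubset_of_ne_of_subset hne hI.subset_ground)
        rw [hm] at hlt
        have := Order.add_one_le_of_lt hlt
        have h23 : (3 : ℕ∞) = 2 + 1 := by norm_num
        rw [h23] at this
        exact (WithTop.add_le_add_iff_right (by norm_num : (1:ℕ∞) ≠ ⊤)).mp this
      · rintro ⟨hIE, hle⟩
        rcases encard_le_two_cases (by exact_mod_cast hle) with rfl | ⟨z, rfl⟩ | ⟨z, w, hzw, rfl⟩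
        · exact P.empty_indep
        · exact hsing z (hIE rfl)
        · exact hp2 z (hIE (by simp)) w (hIE (by simp)) hzw
    · -- U_{1,3}
      push_neg at hp2
      obtain ⟨u, huE, v, hvE, huv, hdep⟩ := hp2
      have hrk : eRank P ≤ 1 := by
        by_contra hrk1
        push_neg at hrk1
        have hrk2 : 2 ≤ eRank P := by
          have h1b := Order.add_one_le_of_lt hrk1
          have h11 : (1 : ℕ∞) + 1 = 2 := by norm_num
          exact h11 ▸ h1b
        have hsub : ({u, v} : Set α) ⊆ P.E := insert_subset huE (singleton_subset_iff.mpr hvE)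
        refine hP3 1 {u, v} (P.E \ {u, v}) (by norm_num) ?_
        have hcompl1 : (P.E \ {u, v}).encard = 1 := by
          have hs := encard_diff_add_encard_of_subset hsub
          rw [encard_pair huv, hm] at hs
          lift (P.E \ {u, v}).encard to ℕ using (hfin.subset diff_subset).encard_lt_top.ne
            with dd hdd
          norm_cast at hs ⊢
          omega
        refine ⟨disjoint_sdiff_right, union_diff_cancel hsub, ?_, by
          simp [encard_pair huv], by rw [hcompl1]; norm_cast⟩
        unfold KSeparating
        have ha : eRk P {u, v} ≤ 1 := by
          have hlt := eRk_lt_encard_of_dep hdep ((finite_singleton v).insert u)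
          rw [encard_pair huv] at hlt
          have h1b := Order.add_one_le_of_lt hlt
          have h11 : (2 : ℕ∞) = 1 + 1 := by norm_num
          rw [h11] at h1b
          exact (WithTop.add_le_add_iff_right (by norm_num : (1:ℕ∞) ≠ ⊤)).mp h1b
        have hb : eRk P (P.E \ {u, v}) ≤ 1 := (eRk_le_encard _ _).trans_eq hcompl1
        calc eRk P {u, v} + eRk P (P.E \ {u, v}) + 1
            ≤ 1 + 1 + 1 := add_le_add (add_le_add ha hb) (le_refl 1)
          _ = 2 + 1 := by norm_num
          _ ≤ eRank P + (1 : ℕ) := by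
              rw [Nat.cast_one]
              exact add_le_add hrk2 (le_refl 1)
      refine Or.inr (Or.inr (Or.inr (Or.inr (Or.inl ⟨by rw [hm]; norm_cast, fun I => ?_⟩))))
      constructor
      · intro hI
        refine ⟨hI.subset_ground, ?_⟩
        calc I.encard ≤ eRk P P.E := le_eRk_of_indep hI hI.subset_ground
          _ ≤ 1 := by rw [eRk_eq_eRank]; exact_mod_cast hrk
      · rintro ⟨hIE, hle⟩
        rcases encard_le_one_iff_eq.mp (by exact_mod_cast hle) with rfl | ⟨z, rfl⟩
        · exact P.empty_indep
        · exact hsing z (hIE rfl)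

end Aux5
section Aux6

variable {M K P Q : Matroid α} {I J X Y B C D A T : Set α} {e a b c x y : α} {k n : ℕ}

lemma isMinorOf_dual (h : IsMinorOf P Q) : IsMinorOf P✶ Q✶ := by
  obtain ⟨C, D, rfl⟩ := h
  have hcon : con Q C = con Q (C ∩ Q.E) := by
    unfold con del
    rw [dual_ground, diff_inter_self_eq_diff]
  have hdel : del (con Q (C ∩ Q.E)) D = del (con Q (C ∩ Q.E)) (D ∩ (con Q (C ∩ Q.E)).E) := by
    unfold del
    rw [diff_inter_self_eq_diff]
  have hC₀E : C ∩ Q.E ⊆ Q.E := inter_subset_right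
  have hD₀E' : D ∩ (con Q (C ∩ Q.E)).E ⊆ Q.E \ (C ∩ Q.E) := by
    rw [con_ground]
    exact inter_subset_right
  have hD₀E : D ∩ (con Q (C ∩ Q.E)).E ⊆ Q.E := hD₀E'.trans diff_subset
  have hdisj : Disjoint (C ∩ Q.E) (D ∩ (con Q (C ∩ Q.E)).E) :=
    disjoint_left.mpr fun z hzC hzD => (hD₀E' hzD).2 hzC
  rw [hcon, hdel, del_con_comm hC₀E hD₀E hdisj, dual_con, dual_del]
  exact ⟨D ∩ (con Q (C ∩ Q.E)).E, C ∩ Q.E, rfl⟩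

/-- Any finite 3-connected matroid with at least four elements contains every
3-connected matroid with at most three elements as a minor (up to isomorphism). -/
lemma hasMinorIso_small [K.Finite] (hK3 : ThreeConnected K) (h4 : 4 ≤ K.E.encard)
    (hP3 : ThreeConnected P) (hsmall : P.E.encard ≤ 3) : HasMinorIso K P := by
  have h2 : 2 ≤ K.E.encard := le_trans (by norm_num) h4
  have hdepE : ¬ K.Indep K.E := ground_dep_of_threeConnected hK3 h2
  obtain ⟨C, hCE, hCdep, hCmin⟩ := exists_circuit_of_dep hdepE
  obtain ⟨a, b, c, hab, hac, hbc, habc⟩ := circuit_three hK3 h4 hCE hCdep hCmin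
  have haC : a ∈ C := habc (by simp)
  have hbC : b ∈ C := habc (by simp)
  rcases classify_small hP3 hsmall with h | h | h | h | h | h
  · obtain ⟨K', hm, hu⟩ := unif00_minor K
    exact ⟨K', hm, iso_of_unif h hu⟩
  · obtain ⟨K', hm, hE', hI'⟩ := circuit_minor hCE hCdep hCmin
      (singleton_subset_iff.mpr haC) (singleton_nonempty a)
    have hu : IsUnif K' 0 1 := unif_of_ground (n := 0) hE' (by simp) hI'
    exact ⟨K', hm, iso_of_unif h hu⟩
  · have hss : {a} ⊂ C := (ssubset_iff_of_subset (singleton_subset_iff.mpr haC)).mpr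
      ⟨b, hbC, by simp [hab.symm]⟩
    obtain ⟨K', hm, hu⟩ := unif11_minor (hCmin {a} hss)
    exact ⟨K', hm, iso_of_unif h hu⟩
  · obtain ⟨K', hm, hE', hI'⟩ := circuit_minor hCE hCdep hCmin
      (insert_subset haC (singleton_subset_iff.mpr hbC)) ⟨a, by simp⟩
    have hu : IsUnif K' 1 2 := unif_of_ground (n := 1) hE'
      (by rw [encard_pair hab]; norm_num) hI'
    exact ⟨K', hm, iso_of_unif h hu⟩
  · -- U_{1,3} via the dual
    have hK3d := threeConnected_dual hK3
    have h4d : 4 ≤ K✶.E.encard := by rwa [dual_ground]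
    have h2d : 2 ≤ K✶.E.encard := le_trans (by norm_num) h4d
    have hdepEd : ¬ K✶.Indep K✶.E := ground_dep_of_threeConnected hK3d h2d
    obtain ⟨C', hC'E, hC'dep, hC'min⟩ := exists_circuit_of_dep hdepEd
    obtain ⟨a', b', c', hab', hac', hbc', habc'⟩ :=
      circuit_three hK3d h4d hC'E hC'dep hC'min
    obtain ⟨K'', hm'', hE'', hI''⟩ := circuit_minor hC'E hC'dep hC'min habc' ⟨a', by simp⟩
    have hu'' : IsUnif K'' 2 3 := unif_of_ground (n := 2) hE''
      (by
        have h3 := encard_eq_three.mpr ⟨a', b', c', hab', hac', hbc', rfl⟩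
        rw [h3]
        norm_num) hI''
    have hdual := isMinorOf_dual hm''
    rw [dual_dual] at hdual
    exact ⟨K''✶, hdual, iso_of_unif h (isUnif_dual_23 hu'')⟩
  · obtain ⟨K', hm, hE', hI'⟩ := circuit_minor hCE hCdep hCmin habc ⟨a, by simp⟩
    have hu : IsUnif K' 2 3 := unif_of_ground (n := 2) hE'
      (by
        have h3 := encard_eq_three.mpr ⟨a, b, c, hab, hac, hbc, rfl⟩
        rw [h3]
        norm_num) hI'
    exact ⟨K', hm, iso_of_unif h hu⟩

end Aux6

section Aux7

variable {M S : Matroid α} {e : α}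

lemma eRank_con_big [M.Finite] (hM3 : ThreeConnected M) (hr : 4 ≤ eRank M) (he : e ∈ M.E) :
    3 ≤ eRank (con M {e}) := by
  have h2 : 2 ≤ M.E.encard := le_trans (by norm_num) (hr.trans (eRank_le_encard_ground M))
  have hnl : M.Indep {e} := indep_singleton_of_threeConnected hM3 h2 he
  obtain ⟨B, hB, heB⟩ := hnl.exists_isBase_superset
  have heB' : e ∈ B := heB rfl
  have hsub : B \ {e} ⊆ M.E \ {e} := diff_subset_diff_left hB.subset_ground
  have hBi : (con M {e}).Indep (B \ {e}) := by
    rw [con_indep_iff (singleton_subset_iff.mpr he)]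
    refine ⟨hsub, {e}, hnl.isBasis_self.isBasis', ?_⟩
    rw [diff_union_of_subset (singleton_subset_iff.mpr heB')]
    exact hB.indep
  have hle : (B \ {e}).encard ≤ eRank (con M {e}) := by
    rw [← eRk_eq_eRank, con_ground]
    exact le_eRk_of_indep hBi hsub
  have hBcard : (B \ {e}).encard + 1 = B.encard := encard_diff_singleton_add_one heB'
  have h4' : 4 ≤ B.encard := by rw [← eRank_eq_of_base hB]; exact hr
  have h3' : 3 ≤ (B \ {e}).encard := by
    have h41 : (3 : ℕ∞) + 1 ≤ (B \ {e}).encard + 1 := by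
      rw [hBcard]
      exact le_trans (by norm_num) h4'
    exact (WithTop.add_le_add_iff_right (by norm_num : (1:ℕ∞) ≠ ⊤)).mp h41
  exact h3'.trans hle

lemma sim_ground_finite [M.Finite] (hS : IsSimplificationOf S (con M {e})) : S.E.Finite := by
  obtain ⟨X, hXnl, -, rfl⟩ := hS
  rw [restrict_ground_eq]
  have hXE : X ⊆ M.E \ {e} := fun x hx => by
    have h := singleton_subset_iff.mp (hXnl x hx).subset_ground
    rwa [con_ground] at h
  exact (M.ground_finite.diff : (M.E \ {e}).Finite).subset hXE

lemma sim_facts [M.Finite] (hM3 : ThreeConnected M) (hr : 4 ≤ eRank M) (he : e ∈ M.E)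
    (hS : IsSimplificationOf S (con M {e})) (hS3 : ThreeConnected S) :
    4 ≤ S.E.encard ∧ S.E.Finite := by
  have hfin : S.E.Finite := sim_ground_finite hS
  obtain ⟨X, hXnl, hXrep, rfl⟩ := hS
  have hXE : X ⊆ (con M {e}).E := fun x hx =>
    singleton_subset_iff.mp (hXnl x hx).subset_ground
  have hsp : (con M {e}).Spanning X := by
    rw [spanning_iff_closure_eq hXE]
    refine subset_antisymm (closure_subset_ground _ _) fun f hf => ?_
    by_cases hnl : (con M {e}).Indep {f}
    · obtain ⟨x, ⟨hxX, hxcl⟩, -⟩ := hXrep f hnl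
      have hmem : f ∈ (con M {e}).closure {x} := by
        rw [hxcl]
        exact (con M {e}).mem_closure_self f hf
      exact (con M {e}).closure_subset_closure (singleton_subset_iff.mpr hxX) hmem
    · have hf0 : f ∈ (con M {e}).closure ∅ := by
        rw [(con M {e}).empty_indep.mem_closure_iff']
        exact ⟨hf, fun hi => absurd (show (con M {e}).Indep {f} by simpa using hi) hnl⟩
      exact (con M {e}).closure_subset_closure (empty_subset X) hf0
  have h1 : eRank (con M {e} ↾ X) = eRk (con M {e}) X := by
    rw [← eRk_eq_eRank, restrict_ground_eq]
    apply le_antisymm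
    · exact eRk_le_of_forall' fun I hI hIX => le_eRk_of_indep hI.of_restrict hIX
    · exact eRk_le_of_forall' fun I hI hIX => le_eRk_of_indep (hI.indep_restrict_of_subset hIX) hIX
  have hrk3 : 3 ≤ eRank (con M {e} ↾ X) := by
    rw [h1, eRk_eq_eRank_of_spanning hsp]
    exact eRank_con_big hM3 hr he
  have h3card : 3 ≤ (con M {e} ↾ X).E.encard :=
    hrk3.trans (eRank_le_encard_ground _)
  have hdep : ¬ (con M {e} ↾ X).Indep ((con M {e} ↾ X).E) :=
    ground_dep_of_threeConnected hS3 (le_trans (by norm_num) h3card)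
  have hlt : eRank (con M {e} ↾ X) < (con M {e} ↾ X).E.encard := by
    rw [← eRk_eq_eRank]
    exact eRk_lt_encard_of_dep hdep (by rwa [restrict_ground_eq] at hfin ⊢)
  refine ⟨?_, hfin⟩
  calc (4 : ℕ∞) = 3 + 1 := by norm_num
    _ ≤ eRank (con M {e} ↾ X) + 1 := add_le_add_left hrk3 1
    _ ≤ (con M {e} ↾ X).E.encard := Order.add_one_le_of_lt hlt

end Aux7
/-- Lemma 3.1. -/
theorem statement_7 {α : Type*} (M N : Matroid α) [M.Finite]
    (hM : ThreeConnected M) (hr : 4 ≤ eRank M) (hrs : 4 ≤ eRank M✶)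
    (hN : ThreeConnected N) (hNM : IsMinorOf N M) (hsmall : N.E.encard ≤ 3) :
    ∀ e, Elastic M e → NElastic M N e := by
  intro e helastic
  obtain ⟨heE, hsi, hco⟩ := helastic
  refine ⟨⟨heE, hsi, hco⟩, ?_, ?_⟩
  · intro S hS
    have hS3 := hsi S hS
    obtain ⟨hbig, hfin⟩ := sim_facts hM hr heE hS hS3
    haveI : S.Finite := ⟨hfin⟩
    exact hasMinorIso_small hS3 hbig hN hsmall
  · intro S hS
    have hS3 := hco S hS
    have hS' : IsSimplificationOf S✶ (del M {e})✶ := hS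
    rw [dual_del] at hS'
    haveI hMd : M✶.Finite := Matroid.dual_finite
    haveI : S.Finite := by
      have hfin := sim_ground_finite hS'
      rw [dual_ground] at hfin
      exact ⟨hfin⟩
    have hS'3 : ThreeConnected S✶ := threeConnected_dual hS3
    have hM' : ThreeConnected M✶ := threeConnected_dual hM
    obtain ⟨hbig, -⟩ := sim_facts hM' hrs (show e ∈ M✶.E by rwa [dual_ground]) hS' hS'3
    have hbigS : 4 ≤ S.E.encard := by rwa [dual_ground] at hbig
    exact hasMinorIso_small hS3 hbigS hN hsmall

end ElasticPaper
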